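/- Suppose there is a set S ⊆ G such that the smallest closed subgroup of G containing S is G itself, and such that every open neighborhood of every point of S has positive ν-measure. Then the 1-eigenspace {v ∈ V : M_ρ(ν) v = v}, the 1-eigenspace of the adjoint {v ∈ V : M_ρ(ν)* v = v}, and the G-fixed-point space {v ∈ V : ρ(g) v = v for all g ∈ G} all coincide. -/

import Mathlib

open MeasureTheory ContinuousLinearMap

/-- **Fixed spaces of the moment operator for measures supported on generators.**
Let `ρ` be a continuous unitary representation of a compact group `G` on a
finite-dimensional complex inner ℂ product space `V`, and let `ν` be a Borel probability
measure on `G`.  Suppose there is a set `S ⊆ G` whose generated subgroup is dense in `G`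
and such that every open neighborhood of every point of `S` has positive `ν`-measure.
Then the `1`-eigenspace of `M = ∫ ρ(g) dν(g)`, the `1`-eigenspace of its adjoint, and the
`G`-fixed-point space all coincide. -/
theorem moment_operator_fixed_space_eq_group_fixed_space
    {G : Type*} [Group G] [TopologicalSpace G] [IsTopologicalGroup G] [CompactSpace G]
    [MeasurableSpace G] [BorelSpace G]
    {V : Type*} [NormedAddCommGroup V] [InnerProductSpace ℂ V] [FiniteDimensional ℂ V]
    (ρ : G → V →L[ℂ] V)
    (hρ_cont : Continuous ρ)
    (hρ_one : ρ 1 = 1)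
    (hρ_mul : ∀ g h : G, ρ (g * h) = ρ g ∘L ρ h)
    (hρ_unitary : ∀ g : G, ρ g ∈ unitary (V →L[ℂ] V))
    (ν : Measure G) [IsProbabilityMeasure ν]
    (S : Set G)
    (hS_gen : (Subgroup.closure S).topologicalClosure = ⊤)
    (hS_supp : ∀ s ∈ S, ∀ U : Set G, IsOpen U → s ∈ U → 0 < ν U)
    (M : V →L[ℂ] V) (hM : M = ∫ g, ρ g ∂ν) :
    {v : V | M v = v} = {v : V | ∀ g : G, ρ g v = v} ∧
      {v : V | ContinuousLinearMap.adjoint M v = v} = {v : V | ∀ g : G, ρ g v = v} := by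
  -- inner-product preservation
  have hinner : ∀ (g : G) (x y : V), inner ℂ (ρ g x) (ρ g y) = (inner ℂ x y : ℂ) := by
    intro g x y
    have h1 : star (ρ g) * ρ g = 1 := (hρ_unitary g).1
    have hA : ContinuousLinearMap.adjoint (ρ g) (ρ g y) = y := by
      rw [← ContinuousLinearMap.star_eq_adjoint]
      have := congrArg (fun A : V →L[ℂ] V => A y) h1
      simpa using this
    calc (inner ℂ (ρ g x) (ρ g y) : ℂ)
        = inner ℂ x (ContinuousLinearMap.adjoint (ρ g) (ρ g y)) :=
          (ContinuousLinearMap.adjoint_inner_right _ _ _).symm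
      _ = inner ℂ x y := by rw [hA]
  have hnorm : ∀ (g : G) (x : V), ‖ρ g x‖ = ‖x‖ := by
    intro g x
    rw [@norm_eq_sqrt_re_inner ℂ, hinner g x x, ← @norm_eq_sqrt_re_inner ℂ]
  -- integrability
  have hIntρ : Integrable ρ ν :=
    hρ_cont.integrable_of_hasCompactSupport (HasCompactSupport.of_compactSpace ρ)
  have happly : ∀ v : V, M v = ∫ g, ρ g v ∂ν := by
    intro v
    rw [hM, ContinuousLinearMap.integral_apply hIntρ]
  have hIntApp : ∀ v : V, Integrable (fun g => ρ g v) ν := fun v =>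
    ((ContinuousLinearMap.apply ℂ V v).continuous.comp hρ_cont).integrable_of_hasCompactSupport
      (HasCompactSupport.of_compactSpace _)
  -- the core lemma: if  re ⟪v, M v⟫ = ‖v‖², then v is fixed by all of G
  have core : ∀ v : V, RCLike.re (inner ℂ v (M v) : ℂ) = ‖v‖ ^ 2 → ∀ g : G, ρ g v = v := by
    intro v hv
    set f : G → ℝ := fun g => ‖v‖ ^ 2 - RCLike.re (inner ℂ v (ρ g v) : ℂ) with hf
    have hcont_inner : Continuous fun g => (inner ℂ v (ρ g v) : ℂ) :=
      continuous_const.inner ((ContinuousLinearMap.apply ℂ V v).continuous.comp hρ_cont)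
    have hf_cont : Continuous f :=
      continuous_const.sub (RCLike.continuous_re.comp hcont_inner)
    have hf_nonneg : ∀ g, 0 ≤ f g := by
      intro g
      have h1 : RCLike.re (inner ℂ v (ρ g v) : ℂ) ≤ ‖v‖ * ‖ρ g v‖ := re_inner_le_norm _ _
      rw [hnorm g v] at h1
      simp only [hf]
      nlinarith
    have hf_int : Integrable f ν :=
      hf_cont.integrable_of_hasCompactSupport (HasCompactSupport.of_compactSpace f)
    have hinner_int : Integrable (fun g => (inner ℂ v (ρ g v) : ℂ)) ν :=
      hcont_inner.integrable_of_hasCompactSupport (HasCompactSupport.of_compactSpace _)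
    have h1 : ∫ g, (inner ℂ v (ρ g v) : ℂ) ∂ν = inner ℂ v (M v) := by
      rw [happly v, integral_inner (hIntApp v) v]
    have h2 : ∫ g, RCLike.re (inner ℂ v (ρ g v) : ℂ) ∂ν = ‖v‖ ^ 2 := by
      rw [integral_re hinner_int, h1, hv]
    have hint_zero : ∫ g, f g ∂ν = 0 := by
      have hre_int : Integrable (fun g => RCLike.re (inner ℂ v (ρ g v) : ℂ)) ν :=
        (RCLike.continuous_re.comp hcont_inner).integrable_of_hasCompactSupport
          (HasCompactSupport.of_compactSpace _)
      simp only [hf]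
      rw [integral_sub (integrable_const _) hre_int, h2, integral_const]
      simp [measure_univ]
    have hae : f =ᵐ[ν] 0 :=
      (integral_eq_zero_iff_of_nonneg hf_nonneg hf_int).mp hint_zero
    have hnull : ν {g | f g ≠ 0} = 0 := by
      simpa [Filter.EventuallyEq, ae_iff] using hae
    -- f vanishes on S
    have hS_fix : ∀ s ∈ S, ρ s v = v := by
      intro s hs
      have hfs : f s = 0 := by
        by_contra h
        have hpos : 0 < f s := lt_of_le_of_ne (hf_nonneg s) (Ne.symm h)
        set U : Set G := f ⁻¹' Set.Ioi (f s / 2) with hU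
        have hUopen : IsOpen U := isOpen_Ioi.preimage hf_cont
        have hsU : s ∈ U := Set.mem_preimage.mpr (Set.mem_Ioi.mpr (half_lt_self hpos))
        have hUsub : U ⊆ {g | f g ≠ 0} := by
          intro g hg
          simp only [hU, Set.mem_preimage, Set.mem_Ioi] at hg
          simp only [Set.mem_setOf_eq]
          intro h0
          rw [h0] at hg
          exact (half_pos hpos).not_gt hg
        have hposU := hS_supp s hs U hUopen hsU
        exact absurd (measure_mono_null hUsub hnull) (ne_of_gt hposU)
      -- from f s = 0 deduce ρ s v = v
      have hre : RCLike.re (inner ℂ v (ρ s v) : ℂ) = ‖v‖ ^ 2 := by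
        simp only [hf] at hfs; linarith
      have hsq : ‖ρ s v - v‖ ^ 2 = 0 := by
        have hns := @norm_sub_sq ℂ V _ _ _ (ρ s v) v
        have hsym : RCLike.re (inner ℂ (ρ s v) v : ℂ) = RCLike.re (inner ℂ v (ρ s v) : ℂ) := by
          rw [← inner_conj_symm v (ρ s v), RCLike.conj_re]
        rw [hsym, hre, hnorm s v] at hns
        linarith
      have h0 : ‖ρ s v - v‖ = 0 := by
        have := sq_nonneg ‖ρ s v - v‖
        nlinarith [norm_nonneg (ρ s v - v)]
      exact sub_eq_zero.mp (norm_eq_zero.mp h0)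
    -- the fixed set is a closed subgroup containing S
    let K : Subgroup G :=
      { carrier := {g | ρ g v = v}
        one_mem' := by simp [hρ_one]
        mul_mem' := by
          intro a b ha hb
          simp only [Set.mem_setOf_eq] at *
          rw [hρ_mul a b]; simp [hb, ha]
        inv_mem' := by
          intro a ha
          simp only [Set.mem_setOf_eq] at *
          have h1 : ρ (a⁻¹ * a) v = v := by simp [hρ_one]
          rw [hρ_mul a⁻¹ a] at h1
          simpa [ha] using h1 }
    have hKclosed : IsClosed (K : Set G) := by
      have hKeq : (K : Set G) = (fun g => ρ g v) ⁻¹' {v} := by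
        ext g; simp [K, Set.mem_preimage]
      rw [hKeq]
      exact isClosed_singleton.preimage ((ContinuousLinearMap.apply ℂ V v).continuous.comp hρ_cont)
    have hle : Subgroup.closure S ≤ K := (Subgroup.closure_le K).mpr hS_fix
    have htop : (Subgroup.closure S).topologicalClosure ≤ K :=
      Subgroup.topologicalClosure_minimal _ hle hKclosed
    rw [hS_gen] at htop
    intro g
    exact htop (Subgroup.mem_top g)
  -- converse: fixed vectors are fixed by M
  have hMfix : ∀ v : V, (∀ g : G, ρ g v = v) → M v = v := by
    intro v hv
    rw [happly v]
    simp only [hv]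
    simp [measure_univ]
  constructor
  · ext v
    simp only [Set.mem_setOf_eq]
    constructor
    · intro hv
      apply core
      rw [hv]
      exact inner_self_eq_norm_sq v
    · exact hMfix v
  · ext v
    simp only [Set.mem_setOf_eq]
    constructor
    · intro hv
      apply core
      have h1 : (inner ℂ v (M v) : ℂ) = inner ℂ (ContinuousLinearMap.adjoint M v) v := by
        rw [ContinuousLinearMap.adjoint_inner_left]
      rw [h1, hv]
      exact inner_self_eq_norm_sq v
    · intro hv
      apply ext_inner_right ℂ
      intro w
      rw [ContinuousLinearMap.adjoint_inner_left]
      have h1 : (inner ℂ v (M w) : ℂ) = inner ℂ v w := by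
        rw [happly w, ← integral_inner (hIntApp w) v]
        have heq : ∀ g : G, (inner ℂ v (ρ g w) : ℂ) = inner ℂ v w := by
          intro g
          calc (inner ℂ v (ρ g w) : ℂ) = inner ℂ (ρ g v) (ρ g w) := by rw [hv g]
            _ = inner ℂ v w := hinner g v w
        simp only [heq]
        simp [measure_univ]
      rw [h1]
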